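/- Let Ψ be a monotone Boolean formula over x_1,y_1,...,x_n,y_n and D_n = x_1∧y_1 ∨ ... ∨ x_n∧y_n. If Ψ → D_n is not a tautology, then the function computed by (Ψ ∧ (w_1∧w_3 ∨ w_2∧w_4)) ∧ (D_n ∨ w_1∧w_2 ∨ w_3∧w_4) (with fresh variables w_1,...,w_4) is not read-once. -/

import Mathlib

/-- Monotone Boolean formulas over a variable type `V`, built from variables with ∧ and ∨. -/
inductive MonFormula (V : Type) : Type
  | var : V → MonFormula V
  | conj : MonFormula V → MonFormula V → MonFormula V
  | disj : MonFormula V → MonFormula V → MonFormula V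

namespace MonFormula

def eval {V : Type} : MonFormula V → (V → Bool) → Bool
  | var v, a => a v
  | conj φ ψ, a => eval φ a && eval ψ a
  | disj φ ψ, a => eval φ a || eval ψ a

/-- Number of occurrences of the variable `v` in the formula. -/
def occs {V : Type} [DecidableEq V] : MonFormula V → V → ℕ
  | var u, v => if u = v then 1 else 0
  | conj φ ψ, v => occs φ v + occs ψ v
  | disj φ ψ, v => occs φ v + occs ψ v

/-- A formula is read-once if every variable occurs at most once in it. -/
def ReadOnce {V : Type} [DecidableEq V] (φ : MonFormula V) : Prop :=
  ∀ v, φ.occs v ≤ 1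

end MonFormula

/-- A Boolean function is read-once if some read-once monotone formula computes it. -/
def ReadOnceFun {V : Type} [DecidableEq V] (f : (V → Bool) → Bool) : Prop :=
  ∃ φ : MonFormula V, φ.ReadOnce ∧ ∀ a, φ.eval a = f a

namespace MonFormula

theorem eval_congr {V : Type} [DecidableEq V] (φ : MonFormula V) (a b : V → Bool)
    (h : ∀ v, φ.occs v ≠ 0 → a v = b v) : φ.eval a = φ.eval b := by
  induction φ with
  | var v => exact h v (by simp [occs])
  | conj p q ihp ihq =>
      simp only [eval]
      rw [ihp (fun v hv => h v (by simp only [occs]; omega)),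
          ihq (fun v hv => h v (by simp only [occs]; omega))]
  | disj p q ihp ihq =>
      simp only [eval]
      rw [ihp (fun v hv => h v (by simp only [occs]; omega)),
          ihq (fun v hv => h v (by simp only [occs]; omega))]

theorem exists_var {V : Type} [DecidableEq V] (φ : MonFormula V) :
    ∃ v, φ.occs v ≠ 0 := by
  induction φ with
  | var v => exact ⟨v, by simp [occs]⟩
  | conj p q ihp ihq =>
      obtain ⟨v, hv⟩ := ihp
      exact ⟨v, by simp only [occs]; omega⟩
  | disj p q ihp ihq =>
      obtain ⟨v, hv⟩ := ihp
      exact ⟨v, by simp only [occs]; omega⟩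

/-- Substitute constants for the `V`-variables; result is a constant or a formula over `W`. -/
def restrict {V W : Type} : MonFormula (V ⊕ W) → (V → Bool) → Bool ⊕ MonFormula W
  | var (Sum.inl v), a => Sum.inl (a v)
  | var (Sum.inr w), _ => Sum.inr (var w)
  | conj p q, a =>
      match restrict p a, restrict q a with
      | Sum.inl b, Sum.inl c => Sum.inl (b && c)
      | Sum.inl b, Sum.inr ψ => if b then Sum.inr ψ else Sum.inl false
      | Sum.inr ψ, Sum.inl c => if c then Sum.inr ψ else Sum.inl false
      | Sum.inr ψ, Sum.inr χ => Sum.inr (conj ψ χ)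
  | disj p q, a =>
      match restrict p a, restrict q a with
      | Sum.inl b, Sum.inl c => Sum.inl (b || c)
      | Sum.inl b, Sum.inr ψ => if b then Sum.inl true else Sum.inr ψ
      | Sum.inr ψ, Sum.inl c => if c then Sum.inl true else Sum.inr ψ
      | Sum.inr ψ, Sum.inr χ => Sum.inr (disj ψ χ)

def rEval {W : Type} : Bool ⊕ MonFormula W → (W → Bool) → Bool
  | Sum.inl c, _ => c
  | Sum.inr χ, w => χ.eval w

theorem eval_restrict {V W : Type} (φ : MonFormula (V ⊕ W)) (a : V → Bool) (w : W → Bool) :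
    rEval (restrict φ a) w = φ.eval (Sum.elim a w) := by
  induction φ with
  | var v => cases v <;> simp [restrict, rEval, eval]
  | conj p q ihp ihq =>
      simp only [eval, ← ihp, ← ihq]
      rcases hp : restrict p a with b | ψ <;> rcases hq : restrict q a with c | χ <;>
        simp only [restrict, hp, hq, rEval] <;>
        first
          | rfl
          | (cases b <;> simp [rEval])
          | (cases c <;> simp [rEval])
  | disj p q ihp ihq =>
      simp only [eval, ← ihp, ← ihq]
      rcases hp : restrict p a with b | ψ <;> rcases hq : restrict q a with c | χ <;>
        simp only [restrict, hp, hq, rEval] <;>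
        first
          | rfl
          | (cases b <;> simp [rEval])
          | (cases c <;> simp [rEval])

theorem occs_restrict {V W : Type} [DecidableEq V] [DecidableEq W]
    (φ : MonFormula (V ⊕ W)) (a : V → Bool) (χ : MonFormula W)
    (h : restrict φ a = Sum.inr χ) (w : W) : χ.occs w ≤ φ.occs (Sum.inr w) := by
  induction φ generalizing χ with
  | var v =>
      cases v with
      | inl v => simp [restrict] at h
      | inr u =>
          simp only [restrict, Sum.inr.injEq] at h
          subst h
          simp [occs]
  | conj p q ihp ihq =>
      simp only [restrict] at h
      rcases hp : restrict p a with b | ψ <;> rcases hq : restrict q a with c | ξ <;>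
        simp only [hp, hq] at h
      · cases b <;> simp at h
      · cases b
        · simp at h
        · rw [if_pos rfl] at h
          injection h with h
          subst h
          simp only [occs]
          exact le_trans (ihq _ hq) (Nat.le_add_left _ _)
      · cases c
        · simp at h
        · rw [if_pos rfl] at h
          injection h with h
          subst h
          simp only [occs]
          exact le_trans (ihp _ hp) (Nat.le_add_right _ _)
      · simp only [Sum.inr.injEq] at h
        subst h
        simp only [occs]
        exact Nat.add_le_add (ihp _ hp) (ihq _ hq)
  | disj p q ihp ihq =>
      simp only [restrict] at h
      rcases hp : restrict p a with b | ψ <;> rcases hq : restrict q a with c | ξ <;>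
        simp only [hp, hq] at h
      · cases b <;> simp at h
      · cases b
        · rw [if_neg (by simp)] at h
          injection h with h
          subst h
          simp only [occs]
          exact le_trans (ihq _ hq) (Nat.le_add_left _ _)
        · simp at h
      · cases c
        · rw [if_neg (by simp)] at h
          injection h with h
          subst h
          simp only [occs]
          exact le_trans (ihp _ hp) (Nat.le_add_right _ _)
        · simp at h
      · simp only [Sum.inr.injEq] at h
        subst h
        simp only [occs]
        exact Nat.add_le_add (ihp _ hp) (ihq _ hq)

/-- The 3-out-of-4 threshold function in the product form. -/
def Th (w : Fin 4 → Bool) : Bool :=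
  (w 0 && w 2 || w 1 && w 3) && (w 0 && w 1 || w 2 && w 3)

theorem th_single : ∀ v : Fin 4, Th (fun k => decide (k = v)) = false := by decide

theorem th_one : ∀ i : Fin 4, Th (fun k => decide (k ≠ i)) = true := by decide

theorem th_two : ∀ i j : Fin 4, i ≠ j →
    Th (fun k => decide (k ≠ i ∧ k ≠ j)) = false := by decide

theorem th_force : ∀ u : Fin 4 → Bool, ∀ j : Fin 4, Th u = true → u j = false →
    ∀ k, k ≠ j → u k = true := by decide

theorem fin4_third : ∀ i j : Fin 4, ∃ k : Fin 4, k ≠ i ∧ k ≠ j := by decide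

theorem th_not_readonce :
    ¬ ∃ χ : MonFormula (Fin 4), χ.ReadOnce ∧ ∀ w, χ.eval w = Th w := by
  rintro ⟨χ, hro, hc⟩
  cases χ with
  | var v =>
      have := hc (fun k => decide (k = v))
      rw [th_single v] at this
      simp [eval] at this
  | conj α β =>
      obtain ⟨i, hi⟩ := exists_var α
      obtain ⟨j, hj⟩ := exists_var β
      have hij : i ≠ j := by
        rintro rfl
        have := hro i
        simp only [occs] at this
        omega
      -- j not in support of α, i not in support of β
      have hαj : α.occs j = 0 := by
        have := hro j; simp only [occs] at this; omega
      have hβi : β.occs i = 0 := by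
        have := hro i; simp only [occs] at this; omega
      have h1 := hc (fun k => decide (k ≠ i))
      rw [th_one i] at h1
      simp only [eval, Bool.and_eq_true] at h1
      have h2 := hc (fun k => decide (k ≠ j))
      rw [th_one j] at h2
      simp only [eval, Bool.and_eq_true] at h2
      have h3 := hc (fun k => decide (k ≠ i ∧ k ≠ j))
      rw [th_two i j hij] at h3
      have hα : α.eval (fun k => decide (k ≠ i ∧ k ≠ j)) = true := by
        rw [eval_congr α _ (fun k => decide (k ≠ i))]
        · exact h1.1
        · intro v hv
          have hvj : v ≠ j := fun e => hv (e ▸ hαj)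
          simp [hvj]
      have hβ : β.eval (fun k => decide (k ≠ i ∧ k ≠ j)) = true := by
        rw [eval_congr β _ (fun k => decide (k ≠ j))]
        · exact h2.2
        · intro v hv
          have hvi : v ≠ i := fun e => hv (e ▸ hβi)
          simp [hvi]
      simp only [eval] at h3
      rw [hα, hβ] at h3
      simp at h3
  | disj α β =>
      obtain ⟨i, hi⟩ := exists_var α
      obtain ⟨j, hj⟩ := exists_var β
      have hij : i ≠ j := by
        rintro rfl
        have := hro i
        simp only [occs] at this
        omega
      have hαj : α.occs j = 0 := by
        have := hro j; simp only [occs] at this; omega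
      have hβi : β.occs i = 0 := by
        have := hro i; simp only [occs] at this; omega
      -- at ones-except-{i,j}, both α and β evaluate to false
      have h12 := hc (fun k => decide (k ≠ i ∧ k ≠ j))
      rw [th_two i j hij] at h12
      simp only [eval, Bool.or_eq_false_iff] at h12
      -- at ones-except-i, Th is true, α is still false (does not depend on j? no: differs at j only? )
      -- ones-except-i differs from ones-except-{i,j} only at j, which α may use... α avoids j ✓
      have h2 := hc (fun k => decide (k ≠ i))
      rw [th_one i] at h2
      have hα2 : α.eval (fun k => decide (k ≠ i)) = false := by
        rw [eval_congr α _ (fun k => decide (k ≠ i ∧ k ≠ j))]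
        · exact h12.1
        · intro v hv
          have hvj : v ≠ j := fun e => hv (e ▸ hαj)
          simp [hvj]
      have hβ2 : β.eval (fun k => decide (k ≠ i)) = true := by
        simp only [eval, hα2, Bool.false_or] at h2
        exact h2
      -- symmetrically
      have h3 := hc (fun k => decide (k ≠ j))
      rw [th_one j] at h3
      have hβ3 : β.eval (fun k => decide (k ≠ j)) = false := by
        rw [eval_congr β _ (fun k => decide (k ≠ i ∧ k ≠ j))]
        · exact h12.2
        · intro v hv
          have hvi : v ≠ i := fun e => hv (e ▸ hβi)
          simp [hvi]
      have hα3 : α.eval (fun k => decide (k ≠ j)) = true := by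
        simp only [eval, hβ3, Bool.or_false] at h3
        exact h3
      -- hose down to support indicators
      set uβ : Fin 4 → Bool := fun k => decide (β.occs k ≠ 0) && decide (k ≠ i) with huβ
      have hβu : β.eval uβ = true := by
        rw [eval_congr β uβ (fun k => decide (k ≠ i))]
        · exact hβ2
        · intro v hv
          simp [huβ, hv]
      have hThβ : Th uβ = true := by
        have := hc uβ
        simp only [eval, hβu, Bool.or_true] at this
        exact this.symm
      set uα : Fin 4 → Bool := fun k => decide (α.occs k ≠ 0) && decide (k ≠ j) with huα
      have hαu : α.eval uα = true := by
        rw [eval_congr α uα (fun k => decide (k ≠ j))]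
        · exact hα3
        · intro v hv
          simp [huα, hv]
      have hThα : Th uα = true := by
        have := hc uα
        simp only [eval, hαu, Bool.true_or] at this
        exact this.symm
      -- uβ i = false, so every k ≠ i is in the support of β; dually for α.
      obtain ⟨k, hki, hkj⟩ := fin4_third i j
      have hkβ : uβ k = true := th_force uβ i hThβ (by simp [huβ]) k hki
      have hkα : uα k = true := th_force uα j hThα (by simp [huα]) k hkj
      have hkβ' : β.occs k ≠ 0 := by
        simp only [huβ, Bool.and_eq_true, decide_eq_true_eq] at hkβ
        exact hkβ.1
      have hkα' : α.occs k ≠ 0 := by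
        simp only [huα, Bool.and_eq_true, decide_eq_true_eq] at hkα
        exact hkα.1
      have := hro k
      simp only [occs] at this
      omega

end MonFormula

/-- Variables: `Sum.inl (i, false)` is `x_i`, `Sum.inl (i, true)` is `y_i`, and
`Sum.inr 0, …, Sum.inr 3` are the fresh variables `w_1, …, w_4`.
If `Ψ → D_n` is not a tautology, then the function computed by
`(Ψ ∧ (w1∧w3 ∨ w2∧w4)) ∧ (D_n ∨ w1∧w2 ∨ w3∧w4)` is not read-once. -/
theorem stmt_10 (n : ℕ) (Ψ : MonFormula (Fin n × Bool))
    (hnotaut : ∃ a : Fin n × Bool → Bool,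
      Ψ.eval a = true ∧ ¬ ∃ i : Fin n, a (i, false) = true ∧ a (i, true) = true) :
    ¬ ReadOnceFun (fun b : (Fin n × Bool) ⊕ Fin 4 → Bool =>
        (Ψ.eval (fun p => b (Sum.inl p)) &&
          (b (Sum.inr 0) && b (Sum.inr 2) || b (Sum.inr 1) && b (Sum.inr 3))) &&
        (decide (∃ i : Fin n, b (Sum.inl (i, false)) = true ∧
            b (Sum.inl (i, true)) = true) ||
          b (Sum.inr 0) && b (Sum.inr 1) || b (Sum.inr 2) && b (Sum.inr 3))) := by
  rintro ⟨φ, hro, hcomp⟩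
  obtain ⟨a, ha1, ha2⟩ := hnotaut
  have hTh : ∀ w : Fin 4 → Bool,
      MonFormula.rEval (MonFormula.restrict φ a) w = MonFormula.Th w := by
    intro w
    rw [MonFormula.eval_restrict, hcomp]
    simp only [Sum.elim_inl, Sum.elim_inr]
    simp only [ha1, ha2, decide_false]
    simp [MonFormula.Th]
  rcases h : MonFormula.restrict φ a with c | χ
  · have h1 := hTh (fun _ => true)
    have h0 := hTh (fun _ => false)
    rw [h] at h1 h0
    simp [MonFormula.rEval, MonFormula.Th] at h1 h0
    simp [h1] at h0
  · refine MonFormula.th_not_readonce ⟨χ, ?_, ?_⟩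
    · intro w
      exact le_trans (MonFormula.occs_restrict φ a χ h w) (hro _)
    · intro w
      have := hTh w
      rw [h] at this
      exact this
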